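/- Base case of Lemma A.2 (k₁ = 0): for nonnegative integers k_2,...,k_{m+1} with K = ∑_{i=2}^{m+1} k_i treated as a variable bound, one has K^{[m]} + ∑_{∅≠I⊆{2,...,m+1}} K(I)^{[|I|−1]}·(K−K(I))^{[m−|I|]} = (K+1)^{[m]}, where K(I)=∑_{i∈I}k_i. -/

import Mathlib

open Finset

/-- Falling factorial power `x^{[p]} = x(x-1)⋯(x-p+1)` for an integer `x`. -/
def fall (x : ℤ) (p : ℕ) : ℤ := ∏ i ∈ Finset.range p, (x - i)

lemma fall_zero (x : ℤ) : fall x 0 = 1 := by simp [fall]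

lemma fall_succ (x : ℤ) (p : ℕ) : fall x (p+1) = fall x p * (x - p) := by
  simp [fall, Finset.prod_range_succ]

lemma fall_succ' (x : ℤ) (p : ℕ) : fall x (p+1) = x * fall (x-1) p := by
  rw [fall, fall, Finset.prod_range_succ']
  rw [mul_comm]
  congr 1
  · norm_num
  · apply Finset.prod_congr rfl; intro i _; push_cast; ring

lemma fall_zero_succ (p : ℕ) : fall 0 (p+1) = 0 := by
  rw [fall_succ']; ring

lemma fall_pascal (K : ℤ) (n : ℕ) :
    fall (K+1) (n+1) = fall K (n+1) + (n+1) * fall K n := by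
  rw [fall_succ' (K+1) n, fall_succ K n]
  push_cast; ring_nf

lemma fall_key (a b : ℤ) (r q : ℕ) :
    fall (a+1) r * fall (b-1) q - fall a r * fall b q
      = r * fall a (r-1) * fall b q - q * fall (a+1) r * fall (b-1) (q-1) := by
  cases r with
  | zero =>
    cases q with
    | zero => simp [fall_zero]
    | succ q' =>
      simp only [fall_zero, Nat.succ_sub_one, Nat.cast_ofNat, Nat.cast_zero, Nat.cast_succ]
      rw [fall_succ' b q', fall_succ (b-1) q']
      push_cast; ring
  | succ r' =>
    cases q with
    | zero =>
      simp only [fall_zero, Nat.succ_sub_one, Nat.cast_zero, Nat.cast_succ]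
      rw [fall_succ' (a+1) r', fall_succ a r']
      have : a + 1 - 1 = a := by ring
      rw [this]; push_cast; ring
    | succ q' =>
      simp only [Nat.succ_sub_one, Nat.cast_succ]
      rw [fall_succ' (a+1) r', fall_succ a r', fall_succ' b q', fall_succ (b-1) q']
      have : a + 1 - 1 = a := by ring
      rw [this]; push_cast; ring



variable {α : Type*} [DecidableEq α]

lemma pair_sum₁ (s : Finset α) (G : α → Finset α → ℤ) :
    ∑ i ∈ s, ∑ J ∈ (s.erase i).powerset, G i J
      = ∑ I ∈ s.powerset, ∑ i ∈ I, G i (I.erase i) := by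
  rw [Finset.sum_sigma', Finset.sum_sigma']
  refine Finset.sum_nbij' (fun p => ⟨insert p.1 p.2, p.1⟩) (fun p => ⟨p.2, p.1.erase p.2⟩)
    ?_ ?_ ?_ ?_ ?_
  · rintro ⟨i, J⟩ hp
    rw [Finset.mem_sigma, Finset.mem_powerset] at hp
    rw [Finset.mem_sigma, Finset.mem_powerset]
    exact ⟨Finset.insert_subset hp.1 (hp.2.trans (Finset.erase_subset i s)),
      Finset.mem_insert_self _ _⟩
  · rintro ⟨I, i⟩ hp
    rw [Finset.mem_sigma, Finset.mem_powerset] at hp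
    rw [Finset.mem_sigma, Finset.mem_powerset]
    exact ⟨hp.1 hp.2, Finset.erase_subset_erase i hp.1⟩
  · rintro ⟨i, J⟩ hp
    rw [Finset.mem_sigma, Finset.mem_powerset] at hp
    have hiJ : i ∉ J := fun h => (Finset.notMem_erase i s) (hp.2 h)
    simp [Finset.erase_insert hiJ]
  · rintro ⟨I, i⟩ hp
    rw [Finset.mem_sigma, Finset.mem_powerset] at hp
    simp [Finset.insert_erase hp.2]
  · rintro ⟨i, J⟩ hp
    rw [Finset.mem_sigma, Finset.mem_powerset] at hp
    have hiJ : i ∉ J := fun h => (Finset.notMem_erase i s) (hp.2 h)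
    simp [Finset.erase_insert hiJ]

lemma pair_sum₂ (s : Finset α) (H : α → Finset α → ℤ) :
    ∑ i ∈ s, ∑ J ∈ (s.erase i).powerset, H i J
      = ∑ I ∈ s.powerset, ∑ i ∈ s \ I, H i I := by
  rw [Finset.sum_sigma', Finset.sum_sigma']
  refine Finset.sum_nbij' (fun p => ⟨p.2, p.1⟩) (fun p => ⟨p.2, p.1⟩) ?_ ?_ ?_ ?_ ?_
  · rintro ⟨i, J⟩ hp
    rw [Finset.mem_sigma, Finset.mem_powerset, Finset.subset_erase] at hp
    rw [Finset.mem_sigma, Finset.mem_powerset]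
    exact ⟨hp.2.1, Finset.mem_sdiff.mpr ⟨hp.1, hp.2.2⟩⟩
  · rintro ⟨I, i⟩ hp
    rw [Finset.mem_sigma, Finset.mem_powerset, Finset.mem_sdiff] at hp
    rw [Finset.mem_sigma, Finset.mem_powerset, Finset.subset_erase]
    exact ⟨hp.2.1, hp.1, hp.2.2⟩
  · rintro ⟨i, J⟩ _; rfl
  · rintro ⟨I, i⟩ _; rfl
  · rintro ⟨i, J⟩ _; rfl

/-- The key auxiliary sum. -/
def Vs (s : Finset α) (k : α → ℤ) (y c : ℤ) : ℤ :=
  ∑ I ∈ s.powerset,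
    fall (c + ∑ i ∈ I, k i) I.card * fall (y - c - ∑ i ∈ I, k i) (s.card - I.card)

lemma Vs_congr_weights (s : Finset α) {k k' : α → ℤ} (h : ∀ i ∈ s, k i = k' i)
    (y c : ℤ) : Vs s k y c = Vs s k' y c := by
  unfold Vs
  refine Finset.sum_congr rfl fun I hI => ?_
  rw [Finset.mem_powerset] at hI
  rw [Finset.sum_congr rfl fun i hi => h i (hI hi)]

lemma Vs_const : ∀ (n : ℕ) (s : Finset α), s.card = n →
    ∀ (k : α → ℤ) (y c₁ c₂ : ℤ), Vs s k y c₁ = Vs s k y c₂ := by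
  intro n
  induction n with
  | zero =>
    intro s hs k y c₁ c₂
    rw [Finset.card_eq_zero] at hs; subst hs
    simp [Vs, fall_zero]
  | succ n ih =>
    intro s hs k y
    have step : ∀ c : ℤ, Vs s k y (c+1) = Vs s k y c := by
      intro c
      have hcard : ∀ i ∈ s, (s.erase i).card = n := fun i hi => by
        rw [Finset.card_erase_of_mem hi, hs]; omega
      have hA : ∑ i ∈ s, Vs (s.erase i) k y (c + k i)
          = ∑ I ∈ s.powerset, (I.card : ℤ) *
              (fall (c + ∑ i ∈ I, k i) (I.card - 1)
                * fall (y - c - ∑ i ∈ I, k i) (s.card - I.card)) := by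
        unfold Vs
        rw [pair_sum₁ s (fun i J => fall ((c + k i) + ∑ x ∈ J, k x) J.card
          * fall (y - (c + k i) - ∑ x ∈ J, k x) ((s.erase i).card - J.card))]
        refine Finset.sum_congr rfl fun I hI => ?_
        rw [Finset.mem_powerset] at hI
        have hinner : ∀ i ∈ I,
            fall ((c + k i) + ∑ x ∈ I.erase i, k x) (I.erase i).card
              * fall (y - (c + k i) - ∑ x ∈ I.erase i, k x)
                  ((s.erase i).card - (I.erase i).card)
            = fall (c + ∑ x ∈ I, k x) (I.card - 1)
              * fall (y - c - ∑ x ∈ I, k x) (s.card - I.card) := by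
          intro i hi
          have hsum : k i + ∑ x ∈ I.erase i, k x = ∑ x ∈ I, k x :=
            Finset.add_sum_erase I k hi
          have h1 : (c + k i) + ∑ x ∈ I.erase i, k x = c + ∑ x ∈ I, k x := by
            rw [add_assoc, hsum]
          have h2 : y - (c + k i) - ∑ x ∈ I.erase i, k x = y - c - ∑ x ∈ I, k x := by
            rw [← hsum]; ring
          have h3 : (I.erase i).card = I.card - 1 := Finset.card_erase_of_mem hi
          have h5 : 1 ≤ I.card := Finset.card_pos.mpr ⟨i, hi⟩
          have h4 : (s.erase i).card - (I.erase i).card = s.card - I.card := by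
            rw [h3, Finset.card_erase_of_mem (hI hi)]; omega
          rw [h1, h2, h4, h3]
        rw [Finset.sum_congr rfl hinner, Finset.sum_const, nsmul_eq_mul]
      have hB : ∑ i ∈ s, Vs (s.erase i) k y (c + 1)
          = ∑ I ∈ s.powerset, ((s.card - I.card : ℕ) : ℤ) *
              (fall ((c + ∑ i ∈ I, k i) + 1) I.card
                * fall ((y - c - ∑ i ∈ I, k i) - 1) (s.card - I.card - 1)) := by
        unfold Vs
        rw [pair_sum₂ s (fun i J => fall ((c + 1) + ∑ x ∈ J, k x) J.card
          * fall (y - (c + 1) - ∑ x ∈ J, k x) ((s.erase i).card - J.card))]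
        refine Finset.sum_congr rfl fun I hI => ?_
        rw [Finset.mem_powerset] at hI
        have hinner : ∀ i ∈ s \ I,
            fall ((c + 1) + ∑ x ∈ I, k x) I.card
              * fall (y - (c + 1) - ∑ x ∈ I, k x) ((s.erase i).card - I.card)
            = fall ((c + ∑ x ∈ I, k x) + 1) I.card
              * fall ((y - c - ∑ x ∈ I, k x) - 1) (s.card - I.card - 1) := by
          intro i hi
          have hi' := Finset.mem_sdiff.mp hi
          have e1 : (c + 1) + ∑ x ∈ I, k x = (c + ∑ x ∈ I, k x) + 1 := by ring
          have e2 : y - (c + 1) - ∑ x ∈ I, k x = (y - c - ∑ x ∈ I, k x) - 1 := by ring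
          have e3 : (s.erase i).card - I.card = s.card - I.card - 1 := by
            rw [Finset.card_erase_of_mem hi'.1]; omega
          rw [e1, e2, e3]
        rw [Finset.sum_congr rfl hinner, Finset.sum_const, nsmul_eq_mul,
          Finset.card_sdiff_of_subset hI]
      have hdiff : Vs s k y (c+1) - Vs s k y c
          = ∑ i ∈ s, (Vs (s.erase i) k y (c + k i) - Vs (s.erase i) k y (c+1)) := by
        rw [Finset.sum_sub_distrib, hA, hB]
        unfold Vs
        rw [← Finset.sum_sub_distrib, ← Finset.sum_sub_distrib]
        refine Finset.sum_congr rfl fun I hI => ?_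
        have key := fall_key (c + ∑ i ∈ I, k i) (y - c - ∑ i ∈ I, k i)
          I.card (s.card - I.card)
        have e1 : (c + 1) + ∑ i ∈ I, k i = (c + ∑ i ∈ I, k i) + 1 := by ring
        have e2 : y - (c + 1) - ∑ i ∈ I, k i = (y - c - ∑ i ∈ I, k i) - 1 := by ring
        rw [e1, e2, key]
        ring
      have hz : ∀ i ∈ s, Vs (s.erase i) k y (c + k i) - Vs (s.erase i) k y (c+1) = 0 :=
        fun i hi => by rw [ih (s.erase i) (hcard i hi) k y (c + k i) (c+1), sub_self]
      have hfin : Vs s k y (c+1) - Vs s k y c = 0 := by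
        rw [hdiff, Finset.sum_congr rfl hz, Finset.sum_const_zero]
      linarith
    have h0 : ∀ c : ℤ, Vs s k y c = Vs s k y 0 := by
      intro c
      induction c using Int.induction_on with
      | zero => rfl
      | succ i ihp => rw [step, ihp]
      | pred i ihn =>
        have h := step (-(i:ℤ) - 1)
        rw [show (-(i:ℤ) - 1 + 1) = -(i:ℤ) by ring] at h
        rw [← h]; exact ihn
    intro c₁ c₂
    rw [h0 c₁, h0 c₂]

def fS (s : Finset α) (k : α → ℤ) (K : ℤ) : ℤ :=
  ∑ I ∈ s.powerset,
    fall (∑ i ∈ I, k i) (I.card - 1) * fall (K - ∑ i ∈ I, k i) (s.card - I.card)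

lemma powerset_split (s : Finset α) {j : α} (hj : j ∈ s) (F : Finset α → ℤ) :
    ∑ I ∈ s.powerset, F I
      = ∑ J ∈ (s.erase j).powerset, F J + ∑ J ∈ (s.erase j).powerset, F (insert j J) := by
  conv_lhs => rw [← Finset.insert_erase hj]
  exact Finset.sum_powerset_insert (Finset.notMem_erase j s) F

lemma fS_decomp (s : Finset α) {j : α} (hj : j ∈ s) (k : α → ℤ) (K : ℤ) :
    fS s k K
      = (∑ J ∈ (s.erase j).powerset,
          fall (∑ i ∈ J, k i) (J.card - 1) * fall (K - ∑ i ∈ J, k i) (s.card - J.card))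
        + Vs (s.erase j) k K (k j) := by
  unfold fS
  rw [powerset_split s hj]
  congr 1
  unfold Vs
  refine Finset.sum_congr rfl fun J hJ => ?_
  rw [Finset.mem_powerset, Finset.subset_erase] at hJ
  have hjJ : j ∉ J := hJ.2
  have e1 : ∑ i ∈ insert j J, k i = k j + ∑ i ∈ J, k i := Finset.sum_insert hjJ
  have e2 : (insert j J).card = J.card + 1 := Finset.card_insert_of_notMem hjJ
  have e3 : K - (k j + ∑ i ∈ J, k i) = K - k j - ∑ i ∈ J, k i := by ring
  have e4 : s.card - (J.card + 1) = (s.erase j).card - J.card := by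
    rw [Finset.card_erase_of_mem hj]; omega
  rw [e1, e2, e3, e4]
  simp

lemma fS_update (s : Finset α) {j : α} (hj : j ∈ s) (k : α → ℤ) (K : ℤ) :
    fS s k K = fS s (Function.update k j 0) K := by
  rw [fS_decomp s hj k K, fS_decomp s hj (Function.update k j 0) K]
  congr 1
  · refine Finset.sum_congr rfl fun J hJ => ?_
    rw [Finset.mem_powerset, Finset.subset_erase] at hJ
    have : ∑ i ∈ J, k i = ∑ i ∈ J, Function.update k j 0 i :=
      Finset.sum_congr rfl fun i hi =>
        (Function.update_of_ne (fun h => hJ.2 (by rw [← h]; exact hi)) 0 k).symm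
    rw [this]
  · have h1 : Vs (s.erase j) k K (k j) = Vs (s.erase j) k K 0 :=
      Vs_const (s.erase j).card (s.erase j) rfl k K (k j) 0
    have h2 : Vs (s.erase j) k K 0 = Vs (s.erase j) (Function.update k j 0) K 0 :=
      Vs_congr_weights (s.erase j)
        (fun i hi => (Function.update_of_ne (Finset.ne_of_mem_erase hi) 0 k).symm) K 0
    rw [h1, h2, Function.update_self]

lemma fS_congr_weights (s : Finset α) {k k' : α → ℤ} (h : ∀ i ∈ s, k i = k' i)
    (K : ℤ) : fS s k K = fS s k' K := by
  unfold fS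
  refine Finset.sum_congr rfl fun I hI => ?_
  rw [Finset.mem_powerset] at hI
  rw [Finset.sum_congr rfl fun i hi => h i (hI hi)]

lemma fS_zero_support (t : Finset α) (K : ℤ) :
    ∀ (s : Finset α) (k : α → ℤ), (∀ i ∈ t, i ∉ s → k i = 0) →
      fS t k K = fS t (fun _ => 0) K := by
  intro s
  induction s using Finset.induction_on with
  | empty =>
    intro k hk
    exact fS_congr_weights t (fun i hi => hk i hi (Finset.notMem_empty i)) K
  | @insert a s' ha ih =>
    intro k hk
    by_cases hat : a ∈ t
    · rw [fS_update t hat k K]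
      refine ih _ fun i hi his => ?_
      by_cases hia : i = a
      · subst hia; exact Function.update_self i 0 k
      · rw [Function.update_of_ne hia]
        exact hk i hi (by simp [Finset.mem_insert, hia, his])
    · refine ih k fun i hi his => ?_
      refine hk i hi fun hmem => ?_
      rcases Finset.mem_insert.mp hmem with h | h
      · exact hat (h ▸ hi)
      · exact his h

lemma fS_zero (t : Finset α) (K : ℤ) : fS t (fun _ => 0) K = fall (K+1) t.card := by
  unfold fS
  simp only [Finset.sum_const_zero, sub_zero]
  rw [Finset.sum_powerset]
  have hcongr : ∀ j ∈ Finset.range (t.card + 1),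
      ∑ I ∈ Finset.powersetCard j t, fall 0 (I.card - 1) * fall K (t.card - I.card)
        = (t.card.choose j : ℤ) * (fall 0 (j - 1) * fall K (t.card - j)) := by
    intro j hj
    have : ∀ I ∈ Finset.powersetCard j t,
        fall 0 (I.card - 1) * fall K (t.card - I.card)
          = fall 0 (j - 1) * fall K (t.card - j) := by
      intro I hI
      rw [(Finset.mem_powersetCard.mp hI).2]
    rw [Finset.sum_congr rfl this, Finset.sum_const, Finset.card_powersetCard,
      nsmul_eq_mul]
  rw [Finset.sum_congr rfl hcongr]
  rcases Nat.eq_zero_or_pos t.card with h0 | hpos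
  · rw [h0]; simp [fall_zero]
  · obtain ⟨n, hn⟩ : ∃ n, t.card = n + 1 := ⟨t.card - 1, by omega⟩
    rw [hn]
    have hsub : Finset.range 2 ⊆ Finset.range (n + 1 + 1) := by
      apply Finset.range_subset_range.mpr; omega
    rw [← Finset.sum_subset hsub]
    · rw [Finset.sum_range_succ, Finset.sum_range_one]
      have e0 : (0:ℕ) - 1 = 0 := rfl
      have e1 : (1:ℕ) - 1 = 0 := rfl
      simp only [Nat.choose_zero_right, Nat.choose_one_right, e0, e1, fall_zero,
        Nat.sub_zero, Nat.add_sub_cancel, Nat.cast_one, one_mul, mul_one]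
      rw [fall_pascal K n]
      push_cast
      ring
    · intro j hjr hj2
      rw [Finset.mem_range] at hjr
      rw [Finset.mem_range] at hj2
      have : j - 1 = (j - 2) + 1 := by omega
      rw [this, fall_zero_succ]
      ring

lemma fS_eq (t : Finset α) (k : α → ℤ) (K : ℤ) : fS t k K = fall (K+1) t.card := by
  rw [fS_zero_support t K t k (fun i hi hni => absurd hi hni), fS_zero]

/-- Base case `k₁ = 0` of Lemma A.2; the index set `M = {2,…,m+1}` is modelled
by `Fin m`, and the identity is polynomial in `K`, so `K` is an arbitrary integer. -/
theorem lemma_A2_base (m : ℕ) (k : Fin m → ℕ) (K : ℤ) :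
    fall K m
      + ∑ I ∈ (Finset.univ : Finset (Fin m)).powerset.filter (fun I => I.Nonempty),
          fall (∑ i ∈ I, (k i : ℤ)) (I.card - 1)
            * fall (K - ∑ i ∈ I, (k i : ℤ)) (m - I.card)
      = fall (K + 1) m := by
  have h := fS_eq (Finset.univ : Finset (Fin m)) (fun i => (k i : ℤ)) K
  unfold fS at h
  rw [Finset.card_fin] at h
  rw [← Finset.sum_filter_add_sum_filter_not Finset.univ.powerset
    (fun I => I.Nonempty)] at h
  have hemp : (Finset.univ : Finset (Fin m)).powerset.filter
      (fun I : Finset (Fin m) => ¬ I.Nonempty) = {∅} := by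
    ext I
    simp [Finset.not_nonempty_iff_eq_empty]
  rw [hemp, Finset.sum_singleton] at h
  simp only [Finset.sum_empty, Finset.card_empty, Nat.zero_sub, Nat.sub_zero,
    fall_zero, sub_zero, one_mul] at h
  linarith
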